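/- Let D be a strongly connected digraph on a finite vertex set V, and let U be a nonempty proper subset of V whose induced subdigraph is strongly connected. Then U is maximal (with respect to inclusion) among proper subsets of V inducing a strongly connected subdigraph if and only if the following three conditions hold: (1) there exists a vertex ω_in ∉ U such that every arc of D from a vertex of U to a vertex outside U ends at ω_in; (2) there exists a vertex ω_out ∉ U such that every arc of D from a vertex outside U to a vertex of U begins at ω_out; (3) there exists exactly one simple directed path in D from ω_in to ω_out, and the set of vertices of this path is exactly V \ U. -/

import Mathlib

/-- A digraph (given by its adjacency/arc relation `Adj`) is strongly connected if
every vertex can reach every other vertex by a directed path. -/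
def IsStronglyConnected {V : Type*} (Adj : V → V → Prop) : Prop :=
  ∀ x y : V, Relation.ReflTransGen Adj x y

/-- `l` is a simple directed path from `a` to `b` in the digraph `Adj`:
a nonempty list of pairwise distinct vertices, consecutive ones joined by arcs,
starting at `a` and ending at `b`. -/
def IsSimpleDirPath {V : Type*} (Adj : V → V → Prop) (a b : V) (l : List V) : Prop :=
  l.Nodup ∧ l.Chain' Adj ∧ l.head? = some a ∧ l.getLast? = some b

namespace MaxSC

open Relation List

variable {V : Type*} (Adj : V → V → Prop)

/-- The adjacency relation restricted to a set. -/
def AdjOn (S : Set V) (a b : V) : Prop := a ∈ S ∧ b ∈ S ∧ Adj a b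

variable {Adj}

lemma adjOn_mono {S T : Set V} (h : S ⊆ T) {a b : V} (hab : AdjOn Adj S a b) :
    AdjOn Adj T a b := ⟨h hab.1, h hab.2.1, hab.2.2⟩

lemma sc_iff (S : Set V) :
    IsStronglyConnected (fun a b : S => Adj a b) ↔
      ∀ x ∈ S, ∀ y ∈ S, Relation.ReflTransGen (AdjOn Adj S) x y := by
  constructor
  · intro h x hx y hy
    have := h ⟨x, hx⟩ ⟨y, hy⟩
    exact Relation.ReflTransGen.lift (p := AdjOn Adj S) (Subtype.val)
      (fun a b hab => ⟨a.2, b.2, hab⟩) _ _ this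
  · intro h x y
    have key : ∀ (a b : V) (ha : a ∈ S), Relation.ReflTransGen (AdjOn Adj S) a b →
        ∀ hb : b ∈ S, Relation.ReflTransGen (fun a b : S => Adj a b) ⟨a, ha⟩ ⟨b, hb⟩ := by
      intro a b ha hab
      induction hab with
      | refl => intro hb; exact Relation.ReflTransGen.refl
      | tail _ hbc ih =>
        intro hc
        exact Relation.ReflTransGen.tail (ih hbc.1) hbc.2.2
    have := key x.1 y.1 x.2 (h x.1 x.2 y.1 y.2) y.2
    simpa using this

/-- From the head of a chain one can reach every member. -/
lemma chain'_reach_head {r : V → V → Prop} :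
    ∀ (l : List V), l.Chain' r → ∀ b ∈ l.head?, ∀ x ∈ l, Relation.ReflTransGen r b x := by
  intro l
  induction l with
  | nil => intro _ b hb; simp at hb
  | cons a t ih =>
    intro hch b hb x hx
    simp only [head?_cons, Option.mem_def, Option.some.injEq] at hb
    subst hb
    rcases List.mem_cons.mp hx with rfl | hx
    · exact Relation.ReflTransGen.refl
    · have ht : t ≠ [] := List.ne_nil_of_mem hx
      rw [List.Chain', List.isChain_cons] at hch
      have h1 : r a (t.head ht) := hch.1 _ (List.head?_eq_head ht)
      have := ih hch.2 (t.head ht) (List.head?_eq_head ht) x hx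
      exact Relation.ReflTransGen.head h1 this

/-- Every member of a chain can reach the last element. -/
lemma chain'_reach_last {r : V → V → Prop} (l : List V) (hch : l.Chain' r)
    (e : V) (he : e ∈ l.getLast?) (x : V) (hx : x ∈ l) :
    Relation.ReflTransGen r x e := by
  have hch' : l.reverse.Chain' (Function.swap r) := by
    rw [List.Chain', List.isChain_reverse]; exact hch
  have he' : e ∈ l.reverse.head? := by rw [List.head?_reverse]; exact he
  have hx' : x ∈ l.reverse := by simpa using hx
  have := chain'_reach_head l.reverse hch' e he' x hx'
  exact Relation.reflTransGen_swap.mp this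

/-- A chain whose members all lie in `W` is a chain for `AdjOn W`. -/
lemma chain'_adjOn {W : Set V} :
    ∀ (l : List V), l.Chain' Adj → (∀ x ∈ l, x ∈ W) → l.Chain' (AdjOn Adj W) := by
  intro l
  induction l with
  | nil => intro _ _; exact List.isChain_nil
  | cons a t ih =>
    intro hch hmem
    rw [List.Chain', List.isChain_cons] at hch ⊢
    refine ⟨fun y hy => ⟨hmem a (by simp), hmem y (by
      exact List.mem_cons_of_mem a (List.mem_of_mem_head? hy)), hch.1 y hy⟩,
      ih hch.2 fun x hx => hmem x (List.mem_cons_of_mem a hx)⟩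

/-- Extract the suffix of `l` starting at the first occurrence of `a`. -/
lemma suffix_from {l : List V} {a : V} (ha : a ∈ l) :
    ∃ l₂, l₂ <:+ l ∧ l₂ ≠ [] ∧ l₂.head? = some a := by
  classical
  refine ⟨l.drop (l.idxOf a), List.drop_suffix _ _, ?_, ?_⟩
  · have h := List.idxOf_lt_length_iff.mpr ha
    intro hnil
    have : (l.drop (l.idxOf a)).length = l.length - l.idxOf a := List.length_drop
    rw [hnil] at this
    simp at this; omega
  · rw [List.head?_drop]
    have h := List.idxOf_lt_length_iff.mpr ha
    rw [List.getElem?_eq_getElem h, List.getElem_idxOf h]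

lemma getLast?_of_suffix {l l₂ : List V} (h : l₂ <:+ l) (hne : l₂ ≠ []) :
    l₂.getLast? = l.getLast? := by
  obtain ⟨l₁, rfl⟩ := h
  rw [List.getLast?_append]
  cases h2 : l₂.getLast? with
  | none => exact absurd (List.getLast?_eq_none_iff.mp h2) hne
  | some b => simp

/-- Extract a simple directed path from a reflexive-transitive chain. -/
lemma exists_simple_path {r : V → V → Prop} {a b : V} (h : Relation.ReflTransGen r a b) :
    ∃ l : List V, l.Nodup ∧ l.Chain' r ∧ l.head? = some a ∧ l.getLast? = some b ∧
      ∀ x ∈ l, x = a ∨ ∃ y, r y x := by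
  induction h using Relation.ReflTransGen.head_induction_on with
  | refl => exact ⟨[b], by simp, List.isChain_singleton _, by simp, by simp, by simp⟩
  | @head a' c hac hcb ih =>
    obtain ⟨l, hnd, hch, hhd, hlast, hmem⟩ := ih
    by_cases hal : a' ∈ l
    · obtain ⟨l₂, hsuf, hne, hhd₂⟩ := suffix_from hal
      refine ⟨l₂, hsuf.sublist.nodup hnd, hch.suffix hsuf, hhd₂,
        (getLast?_of_suffix hsuf hne).symm ▸ hlast, fun x hx => ?_⟩
      rcases hmem x (hsuf.sublist.mem hx) with rfl | h1
      · exact Or.inr ⟨a', hac⟩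
      · exact Or.inr h1
    · refine ⟨a' :: l, by simp [hnd, hal], ?_, by simp, ?_, ?_⟩
      · rw [List.Chain', List.isChain_cons]
        exact ⟨fun y hy => by
          rw [hhd] at hy; simp only [Option.mem_def, Option.some.injEq] at hy
          subst hy; exact hac, hch⟩
      · rw [show a' :: l = [a'] ++ l from rfl, List.getLast?_append, hlast]; simp
      · intro x hx
        rcases List.mem_cons.mp hx with rfl | hx
        · exact Or.inl rfl
        · rcases hmem x hx with rfl | h1
          · exact Or.inr ⟨a', hac⟩
          · exact Or.inr h1

/-- First arc exiting `U` along a walk from inside `U` to outside. -/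
lemma first_exit {r : V → V → Prop} {U : Set V} {x y : V} (hx : x ∈ U)
    (h : Relation.ReflTransGen r x y) (hy : y ∉ U) :
    ∃ p ∈ U, ∃ q ∉ U, r p q := by
  induction h with
  | refl => exact absurd hx hy
  | @tail b c _ hbc ih =>
    by_cases hb : b ∈ U
    · exact ⟨b, hb, c, hy, hbc⟩
    · obtain ⟨p, hp, q, hq, h⟩ := ih hb
      exact ⟨p, hp, q, hq, h⟩

/-- First arc entering `U` along a walk from outside `U` to inside. -/
lemma first_entry {r : V → V → Prop} {U : Set V} {x y : V} (hx : x ∉ U)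
    (h : Relation.ReflTransGen r x y) (hy : y ∈ U) :
    ∃ p ∉ U, ∃ q ∈ U, r p q := by
  induction h with
  | refl => exact absurd hy hx
  | @tail b c _ hbc ih =>
    by_cases hb : b ∈ U
    · obtain ⟨p, hp, q, hq, h⟩ := ih hb
      exact ⟨p, hp, q, hq, h⟩
    · exact ⟨b, hb, c, hy, hbc⟩

/-- From `a ∉ U` with a walk back into `U`, extract a simple path outside `U`
starting at `a` whose last vertex has an arc into `U`. -/
lemma exists_exit_list {U : Set V} {a u : V} (hu : u ∈ U)
    (h : Relation.ReflTransGen Adj a u) (ha : a ∉ U) :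
    ∃ l : List V, l ≠ [] ∧ l.Nodup ∧ l.Chain' Adj ∧ l.head? = some a ∧
      (∀ x ∈ l, x ∉ U) ∧ ∃ e ∈ l.getLast?, ∃ u' ∈ U, Adj e u' := by
  revert ha
  induction h using Relation.ReflTransGen.head_induction_on with
  | refl => intro ha; exact absurd hu ha
  | @head a' c hac hcb ih =>
    intro ha
    by_cases hc : c ∈ U
    · exact ⟨[a'], by simp, by simp, List.isChain_singleton _, by simp, by simp [ha],
        a', by simp, c, hc, hac⟩
    · obtain ⟨l, hlne, hnd, hch, hhd, hout, e, he, u', hu', heu⟩ := ih hc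
      by_cases hal : a' ∈ l
      · obtain ⟨l₂, hsuf, hne₂, hhd₂⟩ := suffix_from hal
        exact ⟨l₂, hne₂, hsuf.sublist.nodup hnd, hch.suffix hsuf, hhd₂,
          fun x hx => hout x (hsuf.sublist.mem hx),
          e, (getLast?_of_suffix hsuf hne₂) ▸ he, u', hu', heu⟩
      · refine ⟨a' :: l, by simp, by simp [hnd, hal], ?_, by simp, ?_, e, ?_, u', hu', heu⟩
        · rw [List.Chain', List.isChain_cons]
          exact ⟨fun y hy => by
            rw [hhd] at hy; simp only [Option.mem_def, Option.some.injEq] at hy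
            subst hy; exact hac, hch⟩
        · intro x hx
          rcases List.mem_cons.mp hx with rfl | hx
          · exact ha
          · exact hout x hx
        · rw [show a' :: l = [a'] ++ l from rfl, List.getLast?_append]
          simp only [Option.mem_def] at he ⊢
          rw [he]; simp

/-- Strong connectivity of `U ∪ l` when `l` is a chain outside `U` attached to `U`
at both ends. -/
lemma sc_union {U : Set V}
    (hU : ∀ x ∈ U, ∀ y ∈ U, Relation.ReflTransGen (AdjOn Adj U) x y)
    (l : List V) (hch : l.Chain' Adj)
    {u b : V} (hu : u ∈ U) (hb : l.head? = some b) (hub : Adj u b)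
    {u' e : V} (hu' : u' ∈ U) (he : l.getLast? = some e) (heu : Adj e u') :
    ∀ x ∈ U ∪ {x | x ∈ l}, ∀ y ∈ U ∪ {x | x ∈ l},
      Relation.ReflTransGen (AdjOn Adj (U ∪ {x | x ∈ l})) x y := by
  set W : Set V := U ∪ {x | x ∈ l} with hW
  have hUW : U ⊆ W := Set.subset_union_left
  have hlW : ∀ x ∈ l, x ∈ W := fun x hx => Or.inr hx
  have hchW : l.Chain' (AdjOn Adj W) := chain'_adjOn l hch hlW
  have hbl : b ∈ l := List.mem_of_mem_head? hb
  have hel : e ∈ l := List.mem_of_mem_getLast? he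
  have hUreach : ∀ x ∈ U, ∀ y ∈ U, Relation.ReflTransGen (AdjOn Adj W) x y :=
    fun x hx y hy => Relation.ReflTransGen.mono (fun a b => adjOn_mono hUW) _ _ (hU x hx y hy)
  have reach1 : ∀ x ∈ l, Relation.ReflTransGen (AdjOn Adj W) b x :=
    fun x hx => chain'_reach_head l hchW b (by simpa using hb) x hx
  have reach2 : ∀ x ∈ l, Relation.ReflTransGen (AdjOn Adj W) x e :=
    fun x hx => chain'_reach_last l hchW e (by simpa using he) x hx
  have stepin : AdjOn Adj W u b := ⟨hUW hu, hlW b hbl, hub⟩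
  have stepout : AdjOn Adj W e u' := ⟨hlW e hel, hUW hu', heu⟩
  -- from anything to any u'' ∈ U
  have toU : ∀ x ∈ W, ∀ u'' ∈ U, Relation.ReflTransGen (AdjOn Adj W) x u'' := by
    intro x hx u'' hu''
    rcases hx with hx | hx
    · exact hUreach x hx u'' hu''
    · exact ((reach2 x hx).tail stepout).trans (hUreach u' hu' u'' hu'')
  have fromU : ∀ u'' ∈ U, ∀ y ∈ l, Relation.ReflTransGen (AdjOn Adj W) u'' y := by
    intro u'' hu'' y hy
    exact ((hUreach u'' hu'' u hu).tail stepin).trans (reach1 y hy)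
  intro x hx y hy
  rcases hy with hy | hy
  · exact toU x hx y hy
  · exact (toU x hx u hu).trans (fromU u hu y hy)

/-- Maximality forces any attached chain to cover the complement of `U`. -/
lemma cover_of_max {U : Set V}
    (hmax : ∀ W : Set V, U ⊆ W → W ≠ Set.univ →
        IsStronglyConnected (fun a b : W => Adj a b) → W = U)
    (hU : ∀ x ∈ U, ∀ y ∈ U, Relation.ReflTransGen (AdjOn Adj U) x y)
    (l : List V) (hch : l.Chain' Adj) (hout : ∀ x ∈ l, x ∉ U)
    {u b : V} (hu : u ∈ U) (hb : l.head? = some b) (hub : Adj u b)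
    {u' e : V} (hu' : u' ∈ U) (he : l.getLast? = some e) (heu : Adj e u') :
    ∀ v, v ∉ U → v ∈ l := by
  intro v hv
  by_contra hvl
  set W : Set V := U ∪ {x | x ∈ l} with hW
  have hWsc : IsStronglyConnected (fun a b : W => Adj a b) :=
    (sc_iff W).mpr (sc_union hU l hch hu hb hub hu' he heu)
  have hWne : W ≠ Set.univ := by
    intro hWu
    have : v ∈ W := hWu ▸ Set.mem_univ v
    rcases this with h | h
    · exact hv h
    · exact hvl h
  have := hmax W Set.subset_union_left hWne hWsc
  have hbW : b ∈ W := Or.inr (List.mem_of_mem_head? hb)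
  rw [this] at hbW
  exact hout b (List.mem_of_mem_head? hb) hbW

lemma not_mem_drop_of_lt {l : List V} (hnd : l.Nodup) {i j : ℕ} (hi : i < l.length)
    (hij : i < j) : l[i] ∉ l.drop j := by
  intro hmem
  have hsuf : l.drop j <:+ l.drop (i + 1) := by
    have := List.drop_drop (i := j - (i+1)) (j := i+1) (l := l)
    rw [show i + 1 + (j - (i+1)) = j by omega] at this
    rw [← this]
    exact List.drop_suffix _ _
  have h1 : l[i] ∈ l.drop (i + 1) := hsuf.sublist.mem hmem
  have h2 : l[i] ∈ l.take (i + 1) := by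
    have : (l.take (i+1))[i]'(by simp; omega) = l[i] := List.getElem_take
    exact this ▸ List.getElem_mem _
  have hdisj := List.disjoint_of_nodup_append ((List.take_append_drop (i+1) l).symm ▸ hnd)
  exact hdisj h2 h1

lemma not_mem_take_of_le {l : List V} (hnd : l.Nodup) {j k : ℕ} (hj : j < l.length)
    (hkj : k ≤ j) : l[j] ∉ l.take k := by
  intro hmem
  have h1 : l[j] ∈ l.drop k := by
    have hlen : j - k < (l.drop k).length := by simp; omega
    have : (l.drop k)[j - k]'hlen = l[j] := by
      rw [List.getElem_drop]
      congr 1; omega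
    exact this ▸ List.getElem_mem _
  have hdisj := List.disjoint_of_nodup_append ((List.take_append_drop k l).symm ▸ hnd)
  exact hdisj hmem h1

/-- Uniqueness of the simple path from `ωin` to `ωout`. -/
lemma unique_path {U : Set V}
    {l : List V} (hnd : l.Nodup) (hch : l.Chain' Adj)
    (hcov : ∀ x, x ∉ U ↔ x ∈ l)
    {ωin ωout : V} (hhead : l.head? = some ωin) (hlast : l.getLast? = some ωout)
    (h2 : ∀ x ∉ U, ∀ y ∈ U, Adj x y → x = ωout)
    (hns : ∀ i j (hij : i + 2 ≤ j) (hj : j < l.length),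
      ¬ Adj (l[i]'(by omega)) (l[j]'hj))
    {l' : List V} (hl' : IsSimpleDirPath Adj ωin ωout l') : l' = l := by
  classical
  obtain ⟨hnd', hch', hhead', hlast'⟩ := hl'
  set m := l.length with hm
  set m' := l'.length with hm'
  have hlne : l ≠ [] := by intro h; rw [h] at hhead; simp at hhead
  have hlne' : l' ≠ [] := by intro h; rw [h] at hhead'; simp at hhead'
  have hmpos : 0 < m := List.length_pos_iff.mpr hlne
  have hmpos' : 0 < m' := List.length_pos_iff.mpr hlne'
  have hl0 : l[0]'hmpos = ωin := by
    rw [List.head?_eq_getElem?, List.getElem?_eq_getElem hmpos] at hhead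
    simpa using hhead
  have hl'0 : l'[0]'hmpos' = ωin := by
    rw [List.head?_eq_getElem?, List.getElem?_eq_getElem hmpos'] at hhead'
    simpa using hhead'
  have hllast : l[m-1]'(by omega) = ωout := by
    rw [List.getLast?_eq_getElem?, List.getElem?_eq_getElem (by omega : m - 1 < m)] at hlast
    simpa using hlast
  have hl'last : l'[m'-1]'(by omega) = ωout := by
    rw [List.getLast?_eq_getElem?, List.getElem?_eq_getElem (by omega : m' - 1 < m')] at hlast'
    simpa using hlast'
  -- Step (a): no vertex of l' lies in U
  have hout' : ∀ x ∈ l', x ∉ U := by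
    by_contra hcon
    push_neg at hcon
    obtain ⟨x, hxl', hxU⟩ := hcon
    have hP : ∃ k, ∃ h : k < m', l'[k] ∈ U := by
      obtain ⟨n, hn, hn2⟩ := List.mem_iff_getElem.mp hxl'
      exact ⟨n, hn, hn2 ▸ hxU⟩
    have hk0' : Nat.find hP ≠ 0 := by
      intro h0
      obtain ⟨hh, hU0⟩ := (Nat.find_eq_zero hP).mp h0
      rw [hl'0] at hU0
      exact ((hcov ωin).mpr (List.mem_of_mem_head? (by rw [hhead]; rfl))) hU0
    obtain ⟨hklt, hkU⟩ := Nat.find_spec hP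
    set k := Nat.find hP with hk
    have hk0 : k ≠ 0 := hk0'
    have hadj : Adj (l'[k-1]'(by omega)) (l'[k]'hklt) := by
      have := List.isChain_iff_getElem.mp hch' (k-1) (by omega)
      have heq : l'[k-1+1]'(by omega) = l'[k]'hklt := by congr 1; omega
      rwa [heq] at this
    have hprev : l'[k-1]'(by omega) ∉ U := by
      have := Nat.find_min hP (show k - 1 < k by omega)
      push_neg at this
      exact this (by omega)
    have hpout : l'[k-1]'(by omega) = ωout := h2 _ hprev _ hkU hadj
    have : k - 1 = m' - 1 := by
      have := (hnd'.getElem_inj_iff (hi := by omega) (hj := by omega)).mp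
        (hpout.trans hl'last.symm)
      exact this
    omega
  -- Step (b): every vertex of l' lies in l
  have hmem' : ∀ s (hs : s < m'), l'[s] ∈ l :=
    fun s hs => (hcov _).mp (hout' _ (List.getElem_mem hs))
  -- index function
  set idx : ℕ → ℕ := fun s => if hs : s < m' then List.idxOf (l'[s]'hs) l else 0 with hidx
  have idx_lt : ∀ s (hs : s < m'), idx s < m := by
    intro s hs
    simp only [hidx, dif_pos hs]
    exact List.idxOf_lt_length_iff.mpr (hmem' s hs)
  have getElem_idx : ∀ s (hs : s < m'), l[idx s]'(idx_lt s hs) = l'[s]'hs := by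
    intro s hs
    simp only [hidx, dif_pos hs]
    exact List.getElem_idxOf _
  have idx_inj : ∀ s (hs : s < m') t (ht : t < m'), idx s = idx t → s = t := by
    intro s hs t ht hst
    have h1 : l'[s]'hs = l'[t]'ht := by
      rw [← getElem_idx s hs, ← getElem_idx t ht]
      congr 1
    exact (hnd'.getElem_inj_iff).mp h1
  have idx0 : idx 0 = 0 := by
    have h1 : l[idx 0]'(idx_lt 0 hmpos') = l[0]'hmpos := by
      rw [getElem_idx 0 hmpos', hl'0, hl0]
    exact (hnd.getElem_inj_iff).mp h1
  have idxlast : idx (m'-1) = m - 1 := by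
    have h1 : l[idx (m'-1)]'(idx_lt _ (by omega)) = l[m-1]'(by omega) := by
      rw [getElem_idx (m'-1) (by omega), hl'last, hllast]
    exact (hnd.getElem_inj_iff).mp h1
  have idx_step : ∀ s, s + 1 < m' → idx (s+1) ≤ idx s + 1 := by
    intro s hs
    by_contra hcon
    push_neg at hcon
    have hadj : Adj (l'[s]'(by omega)) (l'[s+1]'hs) := by
      have := List.isChain_iff_getElem.mp hch' s (by omega)
      simpa only [List.get_eq_getElem] using this
    rw [← getElem_idx s (by omega), ← getElem_idx (s+1) hs] at hadj
    exact hns (idx s) (idx (s+1)) (by omega) (idx_lt (s+1) hs) hadj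
  have idx_mono : ∀ s, s < m' → idx s ≤ s := by
    intro s
    induction s with
    | zero => intro _; omega
    | succ t ih => intro hs; have := idx_step t hs; have := ih (by omega); omega
  have hmm' : m = m' := by
    have h1 : m ≤ m' := by
      have := idx_mono (m'-1) (by omega)
      rw [idxlast] at this
      omega
    have h2 : m' ≤ m := by
      have hinj : Function.Injective (fun s : Fin m' => (⟨idx s.1, idx_lt s.1 s.2⟩ : Fin m)) := by
        intro s t hst
        simp only [Fin.mk.injEq] at hst
        exact Fin.ext (idx_inj s.1 s.2 t.1 t.2 hst)
      have := Fintype.card_le_of_injective _ hinj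
      simpa using this
    omega
  have idx_id : ∀ s, s < m' → idx s = s := by
    intro s
    induction s using Nat.strong_induction_on with
    | _ s ih =>
      intro hs
      by_contra hcon
      have hlt : idx s < s := by
        have := idx_mono s hs
        omega
      have := ih (idx s) hlt (by omega)
      exact hcon (idx_inj (idx s) (by omega) s hs this)
  refine List.ext_getElem (by omega) ?_
  intro n h1 h2
  rw [← getElem_idx n h1]
  congr 1
  exact idx_id n h1

lemma head?_of_prefix {l l₂ : List V} (h : l₂ <+: l) (hne : l₂ ≠ []) :
    l₂.head? = l.head? := by
  obtain ⟨l₁, rfl⟩ := h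
  rw [List.head?_append]
  cases h2 : l₂.head? with
  | none => exact absurd (List.head?_eq_none_iff.mp h2) hne
  | some b => simp

end MaxSC

open MaxSC Relation List in
theorem MaxSC.aux_main
    {V : Type*} [Fintype V] (Adj : V → V → Prop)
    (hirr : ∀ x : V, ¬ Adj x x)
    (hconn : IsStronglyConnected Adj)
    (U : Set V) (hne : U.Nonempty) (hproper : U ≠ Set.univ)
    (hU : IsStronglyConnected (fun a b : U => Adj a b)) :
    (∀ W : Set V, U ⊆ W → W ≠ Set.univ →
        IsStronglyConnected (fun a b : W => Adj a b) → W = U) ↔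
      (∃ ωin : V, ωin ∉ U ∧ ∃ ωout : V, ωout ∉ U ∧
        (∀ x ∈ U, ∀ y ∉ U, Adj x y → y = ωin) ∧
        (∀ x ∉ U, ∀ y ∈ U, Adj x y → x = ωout) ∧
        (∃ l : List V, IsSimpleDirPath Adj ωin ωout l ∧ {x : V | x ∈ l} = Uᶜ) ∧
        (∀ l₁ l₂ : List V, IsSimpleDirPath Adj ωin ωout l₁ →
          IsSimpleDirPath Adj ωin ωout l₂ → l₁ = l₂)) := by
  classical
  constructor
  · -- maximality implies the three conditions
    intro hmax
    have hU' : ∀ x ∈ U, ∀ y ∈ U, Relation.ReflTransGen (AdjOn Adj U) x y := (sc_iff U).mp hU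
    obtain ⟨v₀, hv₀⟩ := (Set.ne_univ_iff_exists_notMem U).mp hproper
    obtain ⟨u₀, hu₀⟩ := hne
    obtain ⟨u1, hu1, b, hb, hub⟩ := first_exit hu₀ (hconn u₀ v₀) hv₀
    obtain ⟨l, hlne, hnd, hch, hhd, hout, e, he, u2, hu2, heu⟩ :=
      exists_exit_list hu₀ (hconn b u₀) hb
    have he' : l.getLast? = some e := he
    have hcover : ∀ v, v ∉ U → v ∈ l :=
      cover_of_max hmax hU' l hch hout hu1 hhd hub hu2 he' heu
    have hcov : ∀ x, x ∉ U ↔ x ∈ l := fun x => ⟨hcover x, fun hx => hout x hx⟩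
    have hmpos : 0 < l.length := List.length_pos_iff.mpr hlne
    have hl0 : l[0]'hmpos = b := by
      rw [List.head?_eq_getElem?, List.getElem?_eq_getElem hmpos] at hhd
      simpa using hhd
    have hllast : l[l.length - 1]'(by omega) = e := by
      rw [List.getLast?_eq_getElem?, List.getElem?_eq_getElem (by omega : l.length - 1 < l.length)] at he'
      simpa using he'
    have hbU : b ∉ U := hb
    have heU : e ∉ U := hout e (List.mem_of_mem_getLast? he)
    -- condition (1)
    have hcond1 : ∀ x ∈ U, ∀ y ∉ U, Adj x y → y = b := by
      intro x hx y hy hxy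
      by_contra hyb
      have hyl : y ∈ l := hcover y hy
      have hjlt : List.idxOf y l < l.length := List.idxOf_lt_length_iff.mpr hyl
      set j := List.idxOf y l with hj
      have hgj : l[j]'hjlt = y := List.getElem_idxOf hjlt
      have hj0 : j ≠ 0 := by
        intro h0
        apply hyb
        rw [← hgj, ← hl0]; simp only [h0]
      have hdne : l.drop j ≠ [] := by
        intro hn
        have : (l.drop j).length = l.length - j := List.length_drop
        rw [hn] at this; simp at this; omega
      have hch₂ : (l.drop j).Chain' Adj := hch.suffix (List.drop_suffix _ _)
      have hhd₂ : (l.drop j).head? = some y := by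
        rw [List.head?_drop, List.getElem?_eq_getElem hjlt, hgj]
      have hout₂ : ∀ z ∈ l.drop j, z ∉ U :=
        fun z hz => hout z ((List.drop_suffix _ _).sublist.mem hz)
      have hlast₂ : (l.drop j).getLast? = some e := by
        rw [getLast?_of_suffix (List.drop_suffix _ _) hdne, he']
      have hcov₂ := cover_of_max hmax hU' (l.drop j) hch₂ hout₂ hx hhd₂ hxy hu2 hlast₂ heu
      have : b ∈ l.drop j := hcov₂ b hbU
      rw [← hl0] at this
      exact not_mem_drop_of_lt hnd hmpos (by omega) this
    -- condition (2)
    have hcond2 : ∀ x ∉ U, ∀ y ∈ U, Adj x y → x = e := by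
      intro x hx y hy hxy
      by_contra hxe
      have hxl : x ∈ l := hcover x hx
      have hjlt : List.idxOf x l < l.length := List.idxOf_lt_length_iff.mpr hxl
      set j := List.idxOf x l with hj
      have hgj : l[j]'hjlt = x := List.getElem_idxOf hjlt
      have hjm : j ≠ l.length - 1 := by
        intro h0
        apply hxe
        rw [← hgj, ← hllast]; simp only [h0]
      have htne : l.take (j+1) ≠ [] := by
        intro hn
        have : (l.take (j+1)).length = min (j+1) l.length := List.length_take
        rw [hn] at this; simp at this; omega
      have hch₂ : (l.take (j+1)).Chain' Adj := hch.prefix (List.take_prefix _ _)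
      have hhd₂ : (l.take (j+1)).head? = some b := by
        rw [head?_of_prefix (List.take_prefix _ _) htne, hhd]
      have hlast₂ : (l.take (j+1)).getLast? = some x := by
        rw [List.take_succ, List.getElem?_eq_getElem hjlt, hgj]
        exact List.getLast?_concat
      have hout₂ : ∀ z ∈ l.take (j+1), z ∉ U :=
        fun z hz => hout z ((List.take_prefix _ _).sublist.mem hz)
      have hcov₂ := cover_of_max hmax hU' (l.take (j+1)) hch₂ hout₂ hu1 hhd₂ hub hy hlast₂ hxy
      have : e ∈ l.take (j+1) := hcov₂ e heU
      rw [← hllast] at this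
      exact not_mem_take_of_le hnd (by omega) (by omega) this
    -- no-shortcut property
    have hns : ∀ i j (hij : i + 2 ≤ j) (hjl : j < l.length),
        ¬ Adj (l[i]'(by omega)) (l[j]'hjl) := by
      intro i j hij hjl hadj
      set l₂ := l.take (i+1) ++ l.drop j with hl₂
      have hine : l.take (i+1) ≠ [] := by
        intro hn
        have : (l.take (i+1)).length = min (i+1) l.length := List.length_take
        rw [hn] at this; simp at this; omega
      have hdne : l.drop j ≠ [] := by
        intro hn
        have : (l.drop j).length = l.length - j := List.length_drop
        rw [hn] at this; simp at this; omega
      have hlastt : (l.take (i+1)).getLast? = some (l[i]'(by omega)) := by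
        rw [List.take_succ, List.getElem?_eq_getElem (by omega : i < l.length)]
        exact List.getLast?_concat
      have hheadd : (l.drop j).head? = some (l[j]'hjl) := by
        rw [List.head?_drop, List.getElem?_eq_getElem hjl]
      have hch₂ : l₂.Chain' Adj := by
        rw [hl₂, List.Chain', List.isChain_append]
        refine ⟨hch.prefix (List.take_prefix _ _), hch.suffix (List.drop_suffix _ _), ?_⟩
        intro p hp q hq
        simp only [hlastt, Option.mem_def, Option.some.injEq] at hp
        simp only [hheadd, Option.mem_def, Option.some.injEq] at hq
        subst hp; subst hq; exact hadj
      have hhd₂ : l₂.head? = some b := by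
        rw [hl₂, List.head?_append, head?_of_prefix (List.take_prefix _ _) hine, hhd]
        simp
      have hlast₂ : l₂.getLast? = some e := by
        rw [hl₂, List.getLast?_append, getLast?_of_suffix (List.drop_suffix _ _) hdne, he']
        simp
      have hout₂ : ∀ z ∈ l₂, z ∉ U := by
        intro z hz
        rcases List.mem_append.mp hz with hz | hz
        · exact hout z ((List.take_prefix _ _).sublist.mem hz)
        · exact hout z ((List.drop_suffix _ _).sublist.mem hz)
      have hcov₂ := cover_of_max hmax hU' l₂ hch₂ hout₂ hu1 hhd₂ hub hu2 hlast₂ heu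
      have hiU : l[i+1]'(by omega) ∉ U := hout _ (List.getElem_mem (by omega))
      have : l[i+1]'(by omega) ∈ l₂ := hcov₂ _ hiU
      rcases List.mem_append.mp this with h | h
      · exact not_mem_take_of_le hnd (by omega) (le_refl (i+1)) h
      · exact not_mem_drop_of_lt hnd (by omega) (by omega) h
    refine ⟨b, hbU, e, heU, hcond1, hcond2,
      ⟨l, ⟨hnd, hch, hhd, he'⟩, ?_⟩, ?_⟩
    · ext x
      simp only [Set.mem_setOf_eq, Set.mem_compl_iff]
      exact ⟨fun hx => hout x hx, fun hx => hcover x hx⟩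
    · intro l₁ l₂ h₁ h₂
      rw [unique_path hnd hch hcov hhd he' hcond2 hns h₁,
        unique_path hnd hch hcov hhd he' hcond2 hns h₂]
  · -- the three conditions imply maximality
    rintro ⟨ωin, hωin, ωout, hωout, h1, h2, ⟨l, hl, hlcov⟩, huniq⟩ W hUW hWne hWsc
    by_contra hWU
    obtain ⟨w, hwW, hwU⟩ := Set.exists_of_ssubset (hUW.ssubset_of_ne (Ne.symm hWU))
    have hW' := (sc_iff W).mp hWsc
    obtain ⟨u₀, hu₀⟩ := hne
    have hu₀W : u₀ ∈ W := hUW hu₀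
    obtain ⟨p, hp, q, hq, hpq⟩ := first_entry hwU (hW' w hwW u₀ hu₀W) hu₀
    have hωoutW : ωout ∈ W := (h2 p hp q hq hpq.2.2) ▸ hpq.1
    obtain ⟨p', hp', q', hq', hpq'⟩ := first_exit hu₀ (hW' u₀ hu₀W w hwW) hwU
    have hωinW : ωin ∈ W := (h1 p' hp' q' hq' hpq'.2.2) ▸ hpq'.2.1
    obtain ⟨p2, hnd2, hch2, hhd2, hlast2, hmem2⟩ :=
      exists_simple_path (hW' ωin hωinW ωout hωoutW)
    have hpath2 : IsSimpleDirPath Adj ωin ωout p2 :=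
      ⟨hnd2, hch2.imp (fun a b h => h.2.2), hhd2, hlast2⟩
    have hp2l : p2 = l := huniq p2 l hpath2 hl
    have hp2W : ∀ x ∈ p2, x ∈ W := by
      intro x hx
      rcases hmem2 x hx with rfl | ⟨y, hy⟩
      · exact hωinW
      · exact hy.2.1
    apply hWne
    apply Set.eq_univ_of_univ_subset
    intro x _
    by_cases hxU : x ∈ U
    · exact hUW hxU
    · have hxl : x ∈ l := by
        have : x ∈ Uᶜ := hxU
        rw [← hlcov] at this
        exact this
      exact hp2W x (hp2l ▸ hxl)


/-- Characterization of maximal proper strongly connected subdigraphs: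
a nonempty proper subset `U` inducing a strongly connected subdigraph of a
strongly connected digraph `D` is maximal among proper subsets inducing strongly
connected subdigraphs iff (1) all arcs leaving `U` end at a common vertex `ω_in ∉ U`,
(2) all arcs entering `U` start at a common vertex `ω_out ∉ U`, and
(3) there is exactly one simple directed path in `D` from `ω_in` to `ω_out`,
and its vertex set is exactly the complement of `U`. -/
theorem maximal_strongly_connected_subgraph_iff
    {V : Type*} [Fintype V] (Adj : V → V → Prop)
    (hirr : ∀ x : V, ¬ Adj x x)
    (hconn : IsStronglyConnected Adj)
    (U : Set V) (hne : U.Nonempty) (hproper : U ≠ Set.univ)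
    (hU : IsStronglyConnected (fun a b : U => Adj a b)) :
    (∀ W : Set V, U ⊆ W → W ≠ Set.univ →
        IsStronglyConnected (fun a b : W => Adj a b) → W = U) ↔
      (∃ ωin : V, ωin ∉ U ∧ ∃ ωout : V, ωout ∉ U ∧
        (∀ x ∈ U, ∀ y ∉ U, Adj x y → y = ωin) ∧
        (∀ x ∉ U, ∀ y ∈ U, Adj x y → x = ωout) ∧
        (∃ l : List V, IsSimpleDirPath Adj ωin ωout l ∧ {x : V | x ∈ l} = Uᶜ) ∧
        (∀ l₁ l₂ : List V, IsSimpleDirPath Adj ωin ωout l₁ →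
          IsSimpleDirPath Adj ωin ωout l₂ → l₁ = l₂)) := by
  exact MaxSC.aux_main Adj hirr hconn U hne hproper hU
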